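/- Let a > 0 be real and let x be a real number with x ≤ −1. Then lim_{n→∞} a^n · C_n(x;a)/(−x)_n = e^a. -/

import Mathlib

open Filter Topology Finset

/-- The Pochhammer symbol (rising factorial) `(u)_k = u (u+1) ⋯ (u+k-1)`, with `(u)_0 = 1`. -/
noncomputable def poch (u : ℂ) (k : ℕ) : ℂ := ∏ i ∈ range k, (u + i)

/-- The Charlier polynomial `C_n(x; a) = ∑_{j=0}^n (−n)_j (−x)_j / j! · (−1/a)^j`. -/
noncomputable def charlier (a : ℝ) (n : ℕ) (x : ℂ) : ℂ :=
  ∑ j ∈ range (n + 1),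
    poch (-(n : ℂ)) j * poch (-x) j / (j.factorial : ℂ) * (-(1 / (a : ℂ))) ^ j

/-- Real Pochhammer symbol. -/
noncomputable def pochR (c : ℝ) (k : ℕ) : ℝ := ∏ i ∈ range k, (c + i)

lemma pochR_pos {c : ℝ} (hc : 1 ≤ c) (k : ℕ) : 0 < pochR c k := by
  apply Finset.prod_pos
  intro i _
  have : (0:ℝ) ≤ i := Nat.cast_nonneg i
  linarith

lemma poch_ofReal (c : ℝ) (k : ℕ) : poch (c : ℂ) k = ((pochR c k : ℝ) : ℂ) := by
  unfold poch pochR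
  push_cast
  rfl

lemma poch_neg_nat {n j : ℕ} (h : j ≤ n) :
    poch (-(n : ℂ)) j = (-1) ^ j * (n.descFactorial j : ℂ) := by
  unfold poch
  rw [Nat.descFactorial_eq_prod_range, Nat.cast_prod]
  calc ∏ i ∈ range j, (-(n : ℂ) + i)
      = ∏ i ∈ range j, ((-1) * ((n - i : ℕ) : ℂ)) := by
        refine Finset.prod_congr rfl fun i hi => ?_
        have hi' : i ≤ n := ((Finset.mem_range.mp hi).le.trans h)
        rw [Nat.cast_sub hi']
        ring
    _ = (-1) ^ j * ∏ i ∈ range j, ((n - i : ℕ) : ℂ) := by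
        rw [Finset.prod_mul_distrib, Finset.prod_const, Finset.card_range]

/-- The summand after reindexing. -/
noncomputable def chF (a x : ℝ) (n k : ℕ) : ℝ :=
  (n.choose k : ℝ) * a ^ k * pochR (-x) (n - k) / pochR (-x) n

lemma nat_prod_choose (m k : ℕ) :
    ∏ j ∈ range k, (m + 1 + j) = (m + k).choose k * k.factorial := by
  have h1 := Nat.descFactorial_eq_factorial_mul_choose (m + k) k
  rw [Nat.descFactorial_eq_prod_range] at h1
  calc ∏ j ∈ range k, (m + 1 + j)
      = ∏ j ∈ range k, (m + k - (k - 1 - j)) := by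
        refine Finset.prod_congr rfl fun j hj => ?_
        have := Finset.mem_range.mp hj
        omega
    _ = ∏ i ∈ range k, (m + k - i) := Finset.prod_range_reflect _ _
    _ = (m + k).choose k * k.factorial := by rw [h1]; ring

lemma pochR_split (c : ℝ) (m k : ℕ) :
    pochR c (m + k) = pochR c m * ∏ j ∈ range k, (c + ((m + j : ℕ) : ℝ)) := by
  unfold pochR
  rw [Finset.prod_range_add]

lemma key_eq (a : ℝ) (ha : 0 < a) (x : ℝ) (hx : x ≤ -1) (n : ℕ) :
    (a : ℂ) ^ n * charlier a n (x : ℂ) / poch (-(x : ℂ)) n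
      = ((∑ k ∈ range (n + 1), chF a x n k : ℝ) : ℂ) := by
  have hc1 : (1:ℝ) ≤ -x := by linarith
  have hxC : -(x : ℂ) = ((-x : ℝ) : ℂ) := by push_cast; ring
  rw [charlier, Finset.mul_sum, Finset.sum_div, Complex.ofReal_sum,
    ← Finset.sum_range_reflect]
  refine Finset.sum_congr rfl fun k hk => ?_
  have hk' : k ≤ n := Nat.lt_succ_iff.mp (Finset.mem_range.mp hk)
  have hnk : n + 1 - 1 - k = n - k := by omega
  rw [hnk]
  have hjn : n - k ≤ n := Nat.sub_le n k
  rw [poch_neg_nat hjn, hxC, poch_ofReal, poch_ofReal]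
  have hdesc : n.descFactorial (n - k) = (n - k).factorial * n.choose k := by
    rw [Nat.descFactorial_eq_factorial_mul_choose, Nat.choose_symm hk']
  rw [hdesc]
  have hpow : (-(1 / (a : ℂ))) ^ (n - k) = (-1) ^ (n - k) * (1 / (a : ℂ)) ^ (n - k) := by
    rw [← neg_one_mul, mul_pow]
  rw [hpow]
  have han : (a : ℂ) ^ n = (a : ℂ) ^ k * (a : ℂ) ^ (n - k) := by
    rw [← pow_add, Nat.add_sub_cancel' hk']
  have haC : (a : ℂ) ≠ 0 := by
    simpa using ne_of_gt ha
  have hfac : ((n - k).factorial : ℂ) ≠ 0 := by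
    exact_mod_cast (n - k).factorial_ne_zero
  have hpn : ((pochR (-x) n : ℝ) : ℂ) ≠ 0 := by
    exact_mod_cast ne_of_gt (pochR_pos hc1 n)
  have hneg : ((-1 : ℂ)) ^ (n - k) * ((-1 : ℂ)) ^ (n - k) = 1 := by
    rw [← mul_pow]; norm_num
  unfold chF
  push_cast
  rw [han]
  field_simp
  have hainv : (a:ℂ) ^ (n - k) * ((a:ℂ)⁻¹) ^ (n - k) = 1 := by
    rw [← mul_pow, mul_inv_cancel₀ haC, one_pow]
  linear_combination ((n.choose k : ℂ) * ((pochR (-x) (n - k) : ℝ) : ℂ) * (-1 : ℂ) ^ ((n - k) * 2)) * hainv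
    + ((n.choose k : ℂ) * ((pochR (-x) (n - k) : ℝ) : ℂ)) * hneg
  

lemma chF_nonneg {a x : ℝ} (ha : 0 < a) (hx : x ≤ -1) (n k : ℕ) : 0 ≤ chF a x n k := by
  have hc1 : (1:ℝ) ≤ -x := by linarith
  unfold chF
  have h1 := pochR_pos hc1 (n - k)
  have h2 := pochR_pos hc1 n
  apply div_nonneg _ h2.le
  exact mul_nonneg (mul_nonneg (Nat.cast_nonneg _) (pow_nonneg ha.le k)) h1.le

lemma Qpos {x : ℝ} (hx : x ≤ -1) (m k : ℕ) :
    0 < ∏ j ∈ range k, (-x + ((m + j : ℕ) : ℝ)) := by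
  apply Finset.prod_pos
  intro j _
  have : (0:ℝ) ≤ ((m + j : ℕ) : ℝ) := Nat.cast_nonneg _
  linarith

lemma chF_eq {a x : ℝ} (hx : x ≤ -1) {n k : ℕ} (h : k ≤ n) :
    chF a x n k = (n.choose k : ℝ) * a ^ k / ∏ j ∈ range k, (-x + ((n - k + j : ℕ) : ℝ)) := by
  have hc1 : (1:ℝ) ≤ -x := by linarith
  have hm : n - k + k = n := Nat.sub_add_cancel h
  have hs := pochR_split (-x) (n - k) k
  rw [hm] at hs
  unfold chF
  rw [hs]
  have h1 := (pochR_pos hc1 (n - k)).ne'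
  rw [mul_comm (pochR (-x) (n - k))]
  exact mul_div_mul_right _ _ h1

lemma Qge {x : ℝ} (hx : x ≤ -1) {n k : ℕ} (h : k ≤ n) :
    (n.choose k : ℝ) * k.factorial ≤ ∏ j ∈ range k, (-x + ((n - k + j : ℕ) : ℝ)) := by
  have hm : n - k + k = n := Nat.sub_add_cancel h
  have hnum : ∏ j ∈ range k, ((n - k + 1 + j : ℕ) : ℝ) = (n.choose k : ℝ) * k.factorial := by
    rw [← Nat.cast_prod, nat_prod_choose, hm]
    push_cast
    ring
  rw [← hnum]
  apply Finset.prod_le_prod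
  · intro j _
    exact Nat.cast_nonneg _
  · intro j _
    push_cast
    linarith

lemma chF_bound {a x : ℝ} (ha : 0 < a) (hx : x ≤ -1) (n k : ℕ) :
    ‖chF a x n k‖ ≤ a ^ k / (k.factorial : ℝ) := by
  rw [Real.norm_eq_abs, abs_of_nonneg (chF_nonneg ha hx n k)]
  rcases le_or_gt k n with h | h
  · rw [chF_eq hx h]
    have hQ := Qpos hx (n - k) k
    have hkf : (0:ℝ) < (k.factorial : ℝ) := by exact_mod_cast k.factorial_pos
    rw [div_le_div_iff₀ hQ hkf]
    nlinarith [mul_le_mul_of_nonneg_left (Qge hx h) (pow_nonneg ha.le k)]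
  · rw [chF, Nat.choose_eq_zero_of_lt h]
    simp
    positivity

lemma chF_tendsto {a x : ℝ} (ha : 0 < a) (hx : x ≤ -1) (k : ℕ) :
    Tendsto (fun n => chF a x n k) atTop (𝓝 (a ^ k / (k.factorial : ℝ))) := by
  have hc1 : (1:ℝ) ≤ -x := by linarith
  have hfac : ∀ j : ℕ, Tendsto (fun m : ℕ => ((m + 1 + j : ℕ) : ℝ) / (-x + ((m + j : ℕ) : ℝ)))
      atTop (𝓝 1) := by
    intro j
    have hd : Tendsto (fun m : ℕ => -x + ((m + j : ℕ) : ℝ)) atTop atTop := by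
      apply tendsto_atTop_add_const_left
      have h' : Tendsto (fun m : ℕ => (m : ℝ) + (j : ℝ)) atTop atTop :=
        tendsto_atTop_add_const_right _ _ tendsto_natCast_atTop_atTop
      exact h'.congr fun m => by push_cast; ring
    have h0 : Tendsto (fun m : ℕ => (1 + x) / (-x + ((m + j : ℕ) : ℝ))) atTop (𝓝 0) :=
      Tendsto.div_atTop (tendsto_const_nhds (x := (1 + x : ℝ))) hd
    have h1 := (tendsto_const_nhds (x := (1:ℝ))).add h0
    rw [add_zero] at h1
    refine h1.congr fun m => ?_
    have hpos : 0 < -x + ((m + j : ℕ) : ℝ) := by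
      have : (0:ℝ) ≤ ((m + j : ℕ) : ℝ) := Nat.cast_nonneg _
      linarith
    field_simp
    push_cast
    ring
  have hG : Tendsto
      (fun m : ℕ => ∏ j ∈ range k, (((m + 1 + j : ℕ) : ℝ) / (-x + ((m + j : ℕ) : ℝ))))
      atTop (𝓝 1) := by
    have := tendsto_finset_prod (range k) (fun j _ => hfac j)
    simpa only [Finset.prod_const_one] using this
  have hsub : Tendsto (fun n : ℕ => n - k) atTop atTop := tendsto_sub_atTop_nat k
  have hcomp := ((hG.comp hsub).const_mul (a ^ k / (k.factorial : ℝ)))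
  rw [mul_one] at hcomp
  refine hcomp.congr' ?_
  filter_upwards [eventually_ge_atTop k] with n hn
  have hm : n - k + k = n := Nat.sub_add_cancel hn
  have hnum : ∏ j ∈ range k, ((n - k + 1 + j : ℕ) : ℝ) = (n.choose k : ℝ) * k.factorial := by
    rw [← Nat.cast_prod, nat_prod_choose, hm]
    push_cast
    ring
  have hQ := (Qpos hx (n - k) k).ne'
  have hkf : ((k.factorial : ℝ)) ≠ 0 := by exact_mod_cast k.factorial_ne_zero
  simp only [Function.comp]
  rw [chF_eq hx hn, Finset.prod_div_distrib, hnum, div_mul_div_comm,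
    show a ^ k * ((n.choose k : ℝ) * k.factorial) = ((n.choose k : ℝ) * a ^ k) * k.factorial by
      ring,
    mul_comm ((k.factorial : ℝ)), mul_div_mul_right _ _ hkf]

/-- For `a > 0` and real `x ≤ −1`, `lim_{n→∞} aⁿ C_n(x;a) / (−x)_n = e^a`. -/
theorem charlier_limit_of_le_neg_one (a : ℝ) (ha : 0 < a) (x : ℝ) (hx : x ≤ -1) :
    Tendsto (fun n : ℕ => (a : ℂ) ^ n * charlier a n (x : ℂ) / poch (-(x : ℂ)) n)
      atTop (𝓝 (Real.exp a : ℂ)) := by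
  have h2 : Tendsto (fun n => ∑ k ∈ range (n + 1), chF a x n k) atTop (𝓝 (Real.exp a)) := by
    have hsum : Summable (fun k : ℕ => a ^ k / (k.factorial : ℝ)) :=
      Real.summable_pow_div_factorial a
    have hb : ∀ᶠ n in atTop, ∀ k, ‖chF a x n k‖ ≤ a ^ k / (k.factorial : ℝ) :=
      Eventually.of_forall fun n k => chF_bound ha hx n k
    have hmain := tendsto_tsum_of_dominated_convergence hsum (fun k => chF_tendsto ha hx k) hb
    have hexp : ∑' k : ℕ, a ^ k / (k.factorial : ℝ) = Real.exp a := by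
      rw [Real.exp_eq_exp_ℝ, NormedSpace.exp_eq_tsum_div]
    rw [← hexp]
    refine hmain.congr fun n => ?_
    refine tsum_eq_sum fun k hk => ?_
    have hnk : n < k := by simpa using hk
    simp [chF, Nat.choose_eq_zero_of_lt hnk]
  have h3 := (Complex.continuous_ofReal.tendsto _).comp h2
  exact h3.congr fun n => (key_eq a ha x hx n).symm
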